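/- The generating function for the number of permutations of length n avoiding both 123 and 132 and containing the pattern 213 exactly once is x³/(1−x−x²)², i.e. |Sₙ(123,132;213)| equals the coefficient of xⁿ in x³/(1−x−x²)². -/

import Mathlib

/-- An occurrence of the pattern `τ` (of length `k`) in the permutation `π` (of length `n`)
is a strictly increasing map of positions along which `π` is order-isomorphic to `τ`. -/
def IsOcc {k n : ℕ} (τ : Fin k → Fin k) (π : Fin n → Fin n) (f : Fin k → Fin n) : Prop :=
  StrictMono f ∧ ∀ i j : Fin k, τ i < τ j ↔ π (f i) < π (f j)

/-- `π` avoids the pattern `τ`. -/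
def Avoids {k n : ℕ} (τ : Fin k → Fin k) (π : Fin n → Fin n) : Prop :=
  ¬ ∃ f, IsOcc τ π f

/-- `π` contains exactly one occurrence of the pattern `τ`. -/
def ContainsOnce {k n : ℕ} (τ : Fin k → Fin k) (π : Fin n → Fin n) : Prop :=
  ∃! f, IsOcc τ π f

def p123 : Fin 3 → Fin 3 := ![0, 1, 2]
def p132 : Fin 3 → Fin 3 := ![0, 2, 1]
def p213 : Fin 3 → Fin 3 := ![1, 0, 2]
def p231 : Fin 3 → Fin 3 := ![1, 2, 0]
def p312 : Fin 3 → Fin 3 := ![2, 0, 1]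
def p321 : Fin 3 → Fin 3 := ![2, 1, 0]

namespace Stmt3Aux

set_option linter.unnecessarySimpa false

lemma isOcc_iff3 {n : ℕ} (τ : Fin 3 → Fin 3) (π : Fin n → Fin n) (f : Fin 3 → Fin n) :
    IsOcc τ π f ↔ (f 0 < f 1 ∧ f 1 < f 2 ∧
      ∀ i j : Fin 3, τ i < τ j ↔ π (f i) < π (f j)) := by
  constructor
  · rintro ⟨hm, hc⟩
    exact ⟨hm (by decide), hm (by decide), hc⟩
  · rintro ⟨h01, h12, hc⟩
    refine ⟨?_, hc⟩
    intro i j hij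
    match i, j with
    | 0, 1 => exact h01
    | 1, 2 => exact h12
    | 0, 2 => exact h01.trans h12
    | 0, 0 => exact absurd hij (by simp)
    | 1, 1 => exact absurd hij (by simp)
    | 2, 2 => exact absurd hij (by simp)
    | 1, 0 => exact absurd hij (by decide)
    | 2, 0 => exact absurd hij (by decide)
    | 2, 1 => exact absurd hij (by decide)

lemma isOcc_p213_iff {n : ℕ} (π : Fin n → Fin n) (f : Fin 3 → Fin n) :
    IsOcc p213 π f ↔ f 0 < f 1 ∧ f 1 < f 2 ∧ π (f 1) < π (f 0) ∧ π (f 0) < π (f 2) := by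
  rw [isOcc_iff3]
  constructor
  · rintro ⟨h01, h12, hc⟩
    exact ⟨h01, h12, (hc 1 0).mp (by decide), (hc 0 2).mp (by decide)⟩
  · rintro ⟨h01, h12, hba, hac⟩
    refine ⟨h01, h12, ?_⟩
    intro i j
    match i, j with
    | 0, 0 => simpa using lt_irrefl (π (f 0))
    | 1, 1 => simpa using lt_irrefl (π (f 1))
    | 2, 2 => simpa using lt_irrefl (π (f 2))
    | 1, 0 => simpa [p213] using hba
    | 0, 1 => simp [p213]; omega
    | 0, 2 => simpa [p213] using hac
    | 2, 0 => simp [p213]; omega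
    | 1, 2 => simpa [p213] using hba.trans hac
    | 2, 1 => simp [p213]; omega

lemma isOcc_p123_iff {n : ℕ} (π : Fin n → Fin n) (f : Fin 3 → Fin n) :
    IsOcc p123 π f ↔ f 0 < f 1 ∧ f 1 < f 2 ∧ π (f 0) < π (f 1) ∧ π (f 1) < π (f 2) := by
  rw [isOcc_iff3]
  constructor
  · rintro ⟨h01, h12, hc⟩
    exact ⟨h01, h12, (hc 0 1).mp (by decide), (hc 1 2).mp (by decide)⟩
  · rintro ⟨h01, h12, hab, hbc⟩
    refine ⟨h01, h12, ?_⟩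
    intro i j
    match i, j with
    | 0, 0 => simpa using lt_irrefl (π (f 0))
    | 1, 1 => simpa using lt_irrefl (π (f 1))
    | 2, 2 => simpa using lt_irrefl (π (f 2))
    | 0, 1 => simpa [p123] using hab
    | 1, 0 => simp [p123]; omega
    | 1, 2 => simpa [p123] using hbc
    | 2, 1 => simp [p123]; omega
    | 0, 2 => simpa [p123] using hab.trans hbc
    | 2, 0 => simp [p123]; omega

lemma isOcc_p132_iff {n : ℕ} (π : Fin n → Fin n) (f : Fin 3 → Fin n) :
    IsOcc p132 π f ↔ f 0 < f 1 ∧ f 1 < f 2 ∧ π (f 0) < π (f 2) ∧ π (f 2) < π (f 1) := by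
  rw [isOcc_iff3]
  constructor
  · rintro ⟨h01, h12, hc⟩
    exact ⟨h01, h12, (hc 0 2).mp (by decide), (hc 2 1).mp (by decide)⟩
  · rintro ⟨h01, h12, hac, hcb⟩
    refine ⟨h01, h12, ?_⟩
    intro i j
    match i, j with
    | 0, 0 => simpa using lt_irrefl (π (f 0))
    | 1, 1 => simpa using lt_irrefl (π (f 1))
    | 2, 2 => simpa using lt_irrefl (π (f 2))
    | 0, 2 => simpa [p132] using hac
    | 2, 0 => simp [p132]; omega
    | 2, 1 => simpa [p132] using hcb
    | 1, 2 => simp [p132]; omega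
    | 0, 1 => simpa [p132] using hac.trans hcb
    | 1, 0 => simp [p132]; omega

/-- `ins m p σ` : the permutation of length `m+p+1` given by
`(m+p-1, m+p-2, …, m)  (m+p)  σ` (prefix of length `p` strictly decreasing, then the max,
then `σ` on the values `0,…,m-1`). -/
def ins (m p : ℕ) (σ : Fin m → Fin m) : Fin (m+p+1) → Fin (m+p+1) := fun i =>
  if _h : (i : ℕ) < p then ⟨m + p - 1 - (i : ℕ), by omega⟩
  else if _h2 : (i : ℕ) = p then ⟨m + p, by omega⟩
  else Fin.castLE (by omega) (σ ⟨(i : ℕ) - p - 1, by have := i.isLt; omega⟩)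

lemma ins_val_lt {m p : ℕ} (σ : Fin m → Fin m) {i : Fin (m+p+1)} (h : (i : ℕ) < p) :
    (ins m p σ i : ℕ) = m + p - 1 - (i : ℕ) := by
  simp [ins, h]

lemma ins_val_eq {m p : ℕ} (σ : Fin m → Fin m) {i : Fin (m+p+1)} (h : (i : ℕ) = p) :
    (ins m p σ i : ℕ) = m + p := by
  simp [ins, h]

lemma ins_val_gt {m p : ℕ} (σ : Fin m → Fin m) {i : Fin (m+p+1)} (h : p < (i : ℕ)) :
    (ins m p σ i : ℕ) = σ ⟨(i : ℕ) - p - 1, by have := i.isLt; omega⟩ := by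
  have h1 : ¬ (i : ℕ) < p := by omega
  have h2 : ¬ (i : ℕ) = p := by omega
  simp only [ins, dif_neg h1, dif_neg h2, Fin.coe_castLE]

def E (m p : ℕ) (j : Fin m) : Fin (m+p+1) := ⟨p + 1 + (j : ℕ), by omega⟩

lemma ins_E {m p : ℕ} (σ : Fin m → Fin m) (j : Fin m) :
    (ins m p σ (E m p j) : ℕ) = σ j := by
  have h : p < (E m p j : ℕ) := by simp [E]; omega
  rw [ins_val_gt σ h]
  have harg : (⟨(E m p j : ℕ) - p - 1, by have := (E m p j).isLt; omega⟩ : Fin m) = j := by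
    apply Fin.ext; simp [E]; omega
  rw [harg]

lemma ins_lt_m {m p : ℕ} (σ : Fin m → Fin m) {i : Fin (m+p+1)} (h : p < (i : ℕ)) :
    (ins m p σ i : ℕ) < m := by
  rw [ins_val_gt σ h]; exact (σ _).isLt

lemma m_le_ins {m p : ℕ} (σ : Fin m → Fin m) {i : Fin (m+p+1)} (h : (i : ℕ) ≤ p) :
    m ≤ (ins m p σ i : ℕ) := by
  rcases lt_or_eq_of_le h with h' | h'
  · rw [ins_val_lt σ h']; omega
  · rw [ins_val_eq σ h']; omega

lemma ins_injective {m p : ℕ} {σ : Fin m → Fin m} (hσ : Function.Injective σ) :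
    Function.Injective (ins m p σ) := by
  intro i i' hii
  have hv : (ins m p σ i : ℕ) = (ins m p σ i' : ℕ) := by rw [hii]
  have hi := i.isLt
  have hi' := i'.isLt
  ext
  rcases lt_trichotomy ((i : ℕ)) p with h1 | h1 | h1 <;>
    rcases lt_trichotomy ((i' : ℕ)) p with h2 | h2 | h2
  · rw [ins_val_lt σ h1, ins_val_lt σ h2] at hv; omega
  · rw [ins_val_lt σ h1, ins_val_eq σ h2] at hv; omega
  · rw [ins_val_lt σ h1] at hv; have := ins_lt_m σ h2; omega
  · rw [ins_val_eq σ h1, ins_val_lt σ h2] at hv; omega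
  · omega
  · rw [ins_val_eq σ h1] at hv; have := ins_lt_m σ h2; omega
  · rw [ins_val_lt σ h2] at hv; have := ins_lt_m σ h1; omega
  · rw [ins_val_eq σ h2] at hv; have := ins_lt_m σ h1; omega
  · rw [ins_val_gt σ h1, ins_val_gt σ h2] at hv
    have := hσ (Fin.ext hv)
    have := Fin.mk.injEq .. ▸ this
    omega

lemma ins_bijective {m p : ℕ} {σ : Fin m → Fin m} (hσ : Function.Bijective σ) :
    Function.Bijective (ins m p σ) :=
  Finite.injective_iff_bijective.mp (ins_injective hσ.injective)

lemma ins_arg_inj {m p : ℕ} {σ σ' : Fin m → Fin m} (h : ins m p σ = ins m p σ') : σ = σ' := by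
  funext j
  have := congrFun h (E m p j)
  have hv : (ins m p σ (E m p j) : ℕ) = (ins m p σ' (E m p j) : ℕ) := by rw [this]
  rw [ins_E, ins_E] at hv
  exact Fin.ext hv

lemma ins_le_max {m p : ℕ} (σ : Fin m → Fin m) (i : Fin (m+p+1)) :
    (ins m p σ i : ℕ) ≤ m + p := by
  rcases lt_trichotomy ((i : ℕ)) p with h | h | h
  · rw [ins_val_lt σ h]; omega
  · rw [ins_val_eq σ h]
  · have := ins_lt_m σ h; omega

lemma E_strictMono {m p : ℕ} : StrictMono (E m p) := by
  intro a b hab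
  have := Fin.lt_def.mp hab
  rw [Fin.lt_def]
  simp only [E]
  omega

lemma E_injective {m p : ℕ} : Function.Injective (E m p) := E_strictMono.injective

lemma lift_cmp {m p : ℕ} (σ : Fin m → Fin m) (j j' : Fin m) :
    ins m p σ (E m p j) < ins m p σ (E m p j') ↔ σ j < σ j' := by
  rw [Fin.lt_def, Fin.lt_def, ins_E, ins_E]

lemma isOcc_lift {m p k : ℕ} (σ : Fin m → Fin m) (τ : Fin k → Fin k) (g : Fin k → Fin m)
    (hg : IsOcc τ σ g) : IsOcc τ (ins m p σ) (fun t => E m p (g t)) := by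
  constructor
  · intro a b hab
    exact E_strictMono (hg.1 hab)
  · intro i j
    rw [hg.2 i j]
    exact (lift_cmp σ (g i) (g j)).symm

lemma isOcc_down {m p k : ℕ} (σ : Fin m → Fin m) (τ : Fin k → Fin k)
    (f : Fin k → Fin (m+p+1)) (hocc : IsOcc τ (ins m p σ) f) (hall : ∀ t, p < (f t : ℕ)) :
    ∃ g : Fin k → Fin m, IsOcc τ σ g ∧ f = fun t => E m p (g t) := by
  refine ⟨fun t => ⟨(f t : ℕ) - p - 1, by have := (f t).isLt; have := hall t; omega⟩, ?_, ?_⟩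
  · have hEg : ∀ t, E m p ⟨(f t : ℕ) - p - 1, by have := (f t).isLt; have := hall t; omega⟩ = f t := by
      intro t
      apply Fin.ext
      simp only [E]
      have := hall t
      omega
    constructor
    · intro a b hab
      have h := Fin.lt_def.mp (hocc.1 hab)
      rw [Fin.lt_def]
      have ha := hall a
      have hb := hall b
      simp only
      omega
    · intro i j
      rw [hocc.2 i j]
      conv_lhs => rw [← hEg i, ← hEg j]
      exact lift_cmp σ _ _
  · funext t
    apply Fin.ext
    simp only [E]
    have := hall t
    omega

lemma down123 {m p : ℕ} (σ : Fin m → Fin m) (f : Fin 3 → Fin (m+p+1))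
    (hocc : IsOcc p123 (ins m p σ) f) :
    ∃ g, IsOcc p123 σ g ∧ f = fun t => E m p (g t) := by
  have h := (isOcc_p123_iff _ f).mp hocc
  obtain ⟨h01, h12, hv01, hv12⟩ := h
  have h01' := Fin.lt_def.mp h01
  have h12' := Fin.lt_def.mp h12
  have hv01' := Fin.lt_def.mp hv01
  have hv12' := Fin.lt_def.mp hv12
  have h0 : p < (f 0 : ℕ) := by
    by_contra hc
    push_neg at hc
    have hA : m ≤ (ins m p σ (f 0) : ℕ) := m_le_ins σ hc
    rcases lt_trichotomy ((f 1 : ℕ)) p with h1 | h1 | h1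
    · have e0 : (f 0 : ℕ) < p := by omega
      rw [ins_val_lt σ e0, ins_val_lt σ h1] at hv01'
      omega
    · rw [ins_val_eq σ h1] at hv12'
      have := ins_le_max σ (f 2)
      omega
    · have := ins_lt_m σ h1
      omega
  have h1 : p < (f 1 : ℕ) := by omega
  have h2 : p < (f 2 : ℕ) := by omega
  refine isOcc_down σ p123 f hocc ?_
  intro t
  fin_cases t
  · exact h0
  · exact h1
  · exact h2

lemma down132 {m p : ℕ} (σ : Fin m → Fin m) (f : Fin 3 → Fin (m+p+1))
    (hocc : IsOcc p132 (ins m p σ) f) :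
    ∃ g, IsOcc p132 σ g ∧ f = fun t => E m p (g t) := by
  have h := (isOcc_p132_iff _ f).mp hocc
  obtain ⟨h01, h12, hv02, hv21⟩ := h
  have h01' := Fin.lt_def.mp h01
  have h12' := Fin.lt_def.mp h12
  have hv02' := Fin.lt_def.mp hv02
  have hv21' := Fin.lt_def.mp hv21
  have h0 : p < (f 0 : ℕ) := by
    by_contra hc
    push_neg at hc
    have hA : m ≤ (ins m p σ (f 0) : ℕ) := m_le_ins σ hc
    rcases lt_trichotomy ((f 1 : ℕ)) p with h1 | h1 | h1
    · have e0 : (f 0 : ℕ) < p := by omega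
      have htrans : (ins m p σ (f 0) : ℕ) < (ins m p σ (f 1) : ℕ) :=
        Fin.lt_def.mp (hv02.trans hv21)
      rw [ins_val_lt σ e0, ins_val_lt σ h1] at htrans
      omega
    · rw [ins_val_eq σ h1] at hv21'
      have hf2 : p < (f 2 : ℕ) := by omega
      have := ins_lt_m σ hf2
      omega
    · have := ins_lt_m σ h1
      omega
  have h1 : p < (f 1 : ℕ) := by omega
  have h2 : p < (f 2 : ℕ) := by omega
  refine isOcc_down σ p132 f hocc ?_
  intro t
  fin_cases t
  · exact h0
  · exact h1
  · exact h2

lemma down213 {m p : ℕ} (σ : Fin m → Fin m) (f : Fin 3 → Fin (m+p+1))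
    (hocc : IsOcc p213 (ins m p σ) f) :
    ((f 2 : ℕ) = p ∧ (f 1 : ℕ) < p) ∨ ∃ g, IsOcc p213 σ g ∧ f = fun t => E m p (g t) := by
  have h := (isOcc_p213_iff _ f).mp hocc
  obtain ⟨h01, h12, hv10, hv02⟩ := h
  have h01' := Fin.lt_def.mp h01
  have h12' := Fin.lt_def.mp h12
  have hv10' := Fin.lt_def.mp hv10
  have hv02' := Fin.lt_def.mp hv02
  rcases lt_trichotomy ((f 2 : ℕ)) p with h2 | h2 | h2
  · exfalso
    have e0 : (f 0 : ℕ) < p := by omega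
    rw [ins_val_lt σ e0, ins_val_lt σ h2] at hv02'
    omega
  · exact Or.inl ⟨h2, by omega⟩
  · right
    have h0 : p < (f 0 : ℕ) := by
      by_contra hc
      push_neg at hc
      have hA : m ≤ (ins m p σ (f 0) : ℕ) := m_le_ins σ hc
      have := ins_lt_m σ h2
      omega
    exact isOcc_down σ p213 f hocc (by intro t; match t with
      | 0 => exact h0
      | 1 => omega
      | 2 => omega)

lemma pair_occ {m p : ℕ} (σ : Fin m → Fin m) (a b : Fin (m+p+1)) (hab : a < b)
    (hbp : (b : ℕ) < p) :
    IsOcc p213 (ins m p σ) ![a, b, ⟨p, by omega⟩] := by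
  rw [isOcc_p213_iff]
  have hab' := Fin.lt_def.mp hab
  have hap : (a : ℕ) < p := by omega
  refine ⟨?_, ?_, ?_, ?_⟩
  · simpa using hab
  · simp only [Matrix.cons_val_one, Matrix.head_cons, Matrix.cons_val_two, Matrix.tail_cons]
    rw [Fin.lt_def]
    exact hbp
  · simp only [Matrix.cons_val_zero, Matrix.cons_val_one, Matrix.head_cons]
    rw [Fin.lt_def, ins_val_lt σ hap, ins_val_lt σ hbp]
    omega
  · simp only [Matrix.cons_val_zero, Matrix.cons_val_two, Matrix.tail_cons, Matrix.head_cons]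
    rw [Fin.lt_def, ins_val_lt σ hap, ins_val_eq σ rfl]
    omega

lemma avoids123_ins {m p : ℕ} (σ : Fin m → Fin m) :
    Avoids p123 (ins m p σ) ↔ Avoids p123 σ := by
  constructor
  · intro h ⟨g, hg⟩
    exact h ⟨_, isOcc_lift σ p123 g hg⟩
  · intro h ⟨f, hf⟩
    obtain ⟨g, hg, _⟩ := down123 σ f hf
    exact h ⟨g, hg⟩

lemma avoids132_ins {m p : ℕ} (σ : Fin m → Fin m) :
    Avoids p132 (ins m p σ) ↔ Avoids p132 σ := by
  constructor
  · intro h ⟨g, hg⟩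
    exact h ⟨_, isOcc_lift σ p132 g hg⟩
  · intro h ⟨f, hf⟩
    obtain ⟨g, hg, _⟩ := down132 σ f hf
    exact h ⟨g, hg⟩

lemma avoids213_ins {m p : ℕ} (σ : Fin m → Fin m) :
    Avoids p213 (ins m p σ) ↔ (p ≤ 1 ∧ Avoids p213 σ) := by
  constructor
  · intro h
    constructor
    · by_contra hp
      push_neg at hp
      exact h ⟨_, pair_occ (p := p) σ ⟨0, by omega⟩ ⟨1, by omega⟩
        (Fin.mk_lt_mk.mpr (by omega)) (show (1:ℕ) < p by omega)⟩
    · intro ⟨g, hg⟩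
      exact h ⟨_, isOcc_lift σ p213 g hg⟩
  · rintro ⟨hp, hσ⟩ ⟨f, hf⟩
    rcases down213 σ f hf with ⟨h2, h1⟩ | ⟨g, hg, _⟩
    · have h01 := Fin.lt_def.mp ((isOcc_p213_iff _ f).mp hf).1
      omega
    · exact hσ ⟨g, hg⟩

lemma containsOnce_ins {m p : ℕ} (σ : Fin m → Fin m) :
    ContainsOnce p213 (ins m p σ) ↔
      ((p = 2 ∧ Avoids p213 σ) ∨ (p ≤ 1 ∧ ContainsOnce p213 σ)) := by
  constructor
  · rintro ⟨f, hf, huniq⟩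
    have hp2 : p ≤ 2 := by
      by_contra hp
      push_neg at hp
      have occ1 := pair_occ (p := p) σ ⟨0, by omega⟩ ⟨1, by omega⟩
        (Fin.mk_lt_mk.mpr (by omega)) (show (1:ℕ) < p by omega)
      have occ2 := pair_occ (p := p) σ ⟨0, by omega⟩ ⟨2, by omega⟩
        (Fin.mk_lt_mk.mpr (by omega)) (show (2:ℕ) < p by omega)
      have e1 := huniq _ occ1
      have e2 := huniq _ occ2
      have h12 := congrFun (e1.trans e2.symm) 1
      simp only [Matrix.cons_val_one, Matrix.head_cons] at h12
      have := congrArg Fin.val h12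
      simp at this
    rcases Nat.lt_or_ge p 2 with hp | hp
    · right
      refine ⟨by omega, ?_⟩
      rcases down213 σ f hf with ⟨h2, h1⟩ | ⟨g, hg, hfeq⟩
      · have h01 := Fin.lt_def.mp ((isOcc_p213_iff _ f).mp hf).1
        omega
      · refine ⟨g, hg, ?_⟩
        intro g' hg'
        have := huniq _ (isOcc_lift σ p213 g' hg')
        rw [hfeq] at this
        funext t
        exact E_injective (congrFun this t)
    · left
      have hp' : p = 2 := by omega
      refine ⟨hp', ?_⟩
      intro ⟨g, hg⟩
      have eL := huniq _ (isOcc_lift σ p213 g hg)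
      have eP := huniq _ (pair_occ (p := p) σ ⟨0, by omega⟩ ⟨1, by omega⟩
        (Fin.mk_lt_mk.mpr (by omega)) (show (1:ℕ) < p by omega))
      have h2 := congrFun (eL.trans eP.symm) 2
      simp only [Matrix.cons_val_two, Matrix.tail_cons, Matrix.head_cons] at h2
      have hvv := congrArg Fin.val h2
      simp only [E] at hvv
      omega
  · rintro (⟨hp2, hσ⟩ | ⟨hp1, g, hg, hgu⟩)
    · subst hp2
      refine ⟨_, pair_occ (p := 2) σ ⟨0, by omega⟩ ⟨1, by omega⟩
        (Fin.mk_lt_mk.mpr (by omega)) (show (1:ℕ) < 2 by omega), ?_⟩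
      intro f hf
      rcases down213 σ f hf with ⟨h2, h1⟩ | ⟨g, hg, _⟩
      · have hh := (isOcc_p213_iff _ f).mp hf
        have h01 := Fin.lt_def.mp hh.1
        funext t
        fin_cases t
        · simp only [Matrix.cons_val_zero]
          apply Fin.ext
          simp
          exact Fin.ext (by show (f 0 : ℕ) = 0; omega)
        · simp only [Matrix.cons_val_one, Matrix.head_cons]
          apply Fin.ext
          simp
          omega
        · simp only [Matrix.cons_val_two, Matrix.tail_cons, Matrix.head_cons]
          apply Fin.ext
          simp
          omega
      · exact absurd ⟨g, hg⟩ hσ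
    · refine ⟨fun t => E m p (g t), isOcc_lift σ p213 g hg, ?_⟩
      intro f hf
      rcases down213 σ f hf with ⟨h2, h1⟩ | ⟨g', hg', hfeq⟩
      · have h01 := Fin.lt_def.mp ((isOcc_p213_iff _ f).mp hf).1
        omega
      · rw [hfeq, hgu g' hg']

section Structure

variable {n : ℕ} {π : Fin n → Fin n} {P : Fin n}

/-- prefix before the max is decreasing -/
lemma prefix_dec (hb : Function.Injective π) (h123 : Avoids p123 π)
    (hm : ∀ x, π x ≤ π P) : ∀ a b : Fin n, a < b → b < P → π b < π a := by
  intro a b hab hbP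
  rcases lt_trichotomy (π b) (π a) with h | h | h
  · exact h
  · exact absurd (hb h) (by intro e; rw [e] at hab; exact lt_irrefl _ hab)
  · exfalso
    have hbmax : π b < π P := by
      rcases lt_or_eq_of_le (hm b) with h' | h'
      · exact h'
      · exact absurd (hb h') (by intro e; rw [e] at hbP; exact lt_irrefl _ hbP)
    exact h123 ⟨![a, b, P], (isOcc_p123_iff π _).mpr (by
      simp only [Matrix.cons_val_zero, Matrix.cons_val_one, Matrix.head_cons,
        Matrix.cons_val_two, Matrix.tail_cons]
      exact ⟨hab, hbP, h, hbmax⟩)⟩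

/-- elements after the max are smaller than elements before it -/
lemma cross_dec (hb : Function.Injective π) (h132 : Avoids p132 π)
    (hm : ∀ x, π x ≤ π P) : ∀ a c : Fin n, a < P → P < c → π c < π a := by
  intro a c haP hPc
  rcases lt_trichotomy (π c) (π a) with h | h | h
  · exact h
  · exact absurd (hb h) (by intro e; rw [e] at hPc; exact lt_irrefl _ (haP.trans hPc))
  · exfalso
    have hcmax : π c < π P := by
      rcases lt_or_eq_of_le (hm c) with h' | h'
      · exact h'
      · exact absurd (hb h') (by intro e; rw [e] at hPc; exact lt_irrefl _ hPc)
    exact h132 ⟨![a, P, c], (isOcc_p132_iff π _).mpr (by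
      simp only [Matrix.cons_val_zero, Matrix.cons_val_one, Matrix.head_cons,
        Matrix.cons_val_two, Matrix.tail_cons]
      exact ⟨haP, hPc, h, hcmax⟩)⟩

lemma maxpos_le_two (hb : Function.Injective π) (h123 : Avoids p123 π)
    (hm : ∀ x, π x ≤ π P) (hc : ContainsOnce p213 π) : (P : ℕ) ≤ 2 := by
  by_contra hp
  push_neg at hp
  have hPn := P.isLt
  obtain ⟨f, hf, huniq⟩ := hc
  have hdec := prefix_dec hb h123 hm
  have hmax01 : ∀ (b : Fin n), (0:ℕ) < (b:ℕ) → b < P → IsOcc p213 π ![⟨0, by omega⟩, b, P] := by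
    intro b hb0 hbP
    rw [isOcc_p213_iff]
    simp only [Matrix.cons_val_zero, Matrix.cons_val_one, Matrix.head_cons,
      Matrix.cons_val_two, Matrix.tail_cons]
    have h0b : (⟨0, by omega⟩ : Fin n) < b := Fin.lt_def.mpr hb0
    have h0P : (⟨0, by omega⟩ : Fin n) < P := Fin.lt_def.mpr (show (0:ℕ) < (P:ℕ) by omega)
    refine ⟨h0b, hbP, hdec _ _ h0b hbP, ?_⟩
    rcases lt_or_eq_of_le (hm ⟨0, by omega⟩) with h' | h'
    · exact h'
    · exact absurd (hb h') (by intro e; rw [e] at h0P; exact lt_irrefl _ h0P)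
  have occ1 := hmax01 ⟨1, by omega⟩ (show (0:ℕ) < 1 by omega)
    (Fin.lt_def.mpr (show (1:ℕ) < (P:ℕ) by omega))
  have occ2 := hmax01 ⟨2, by omega⟩ (show (0:ℕ) < 2 by omega)
    (Fin.lt_def.mpr (show (2:ℕ) < (P:ℕ) by omega))
  have e12 := (huniq _ occ1).trans (huniq _ occ2).symm
  have := congrArg Fin.val (congrFun e12 1)
  simp at this

lemma maxpos_le_one (hb : Function.Injective π) (h123 : Avoids p123 π)
    (hm : ∀ x, π x ≤ π P) (ha : Avoids p213 π) : (P : ℕ) ≤ 1 := by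
  by_contra hp
  push_neg at hp
  have hPn := P.isLt
  have hdec := prefix_dec hb h123 hm
  have h0P : (⟨0, by omega⟩ : Fin n) < P := Fin.lt_def.mpr (show (0:ℕ) < (P:ℕ) by omega)
  have h01 : (⟨0, by omega⟩ : Fin n) < ⟨1, by omega⟩ := Fin.lt_def.mpr (show (0:ℕ) < 1 by omega)
  have h1P : (⟨1, by omega⟩ : Fin n) < P := Fin.lt_def.mpr (show (1:ℕ) < (P:ℕ) by omega)
  apply ha
  refine ⟨![⟨0, by omega⟩, ⟨1, by omega⟩, P], (isOcc_p213_iff π _).mpr ?_⟩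
  simp only [Matrix.cons_val_zero, Matrix.cons_val_one, Matrix.head_cons,
    Matrix.cons_val_two, Matrix.tail_cons]
  refine ⟨h01, h1P, hdec _ _ h01 h1P, ?_⟩
  rcases lt_or_eq_of_le (hm ⟨0, by omega⟩) with h' | h'
  · exact h'
  · exact absurd (hb h') (by intro e; rw [e] at h0P; exact lt_irrefl _ h0P)


set_option maxHeartbeats 1000000 in
lemma exists_rep (m p : ℕ) (π : Fin (m+p+1) → Fin (m+p+1)) (hb : Function.Bijective π)
    (h123 : Avoids p123 π) (h132 : Avoids p132 π)
    (hmax : π ⟨p, by omega⟩ = ⟨m + p, by omega⟩) :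
    ∃ σ : Fin m → Fin m, Function.Bijective σ ∧ π = ins m p σ := by
  have hinj := hb.injective
  set P : Fin (m+p+1) := ⟨p, by omega⟩ with hPdef
  have hPv : (P : ℕ) = p := rfl
  have hP : ∀ x, π x ≤ π P := by
    intro x
    rw [hmax]
    exact Fin.le_def.mpr (show (π x : ℕ) ≤ m + p by have := (π x).isLt; omega)
  have hdec := prefix_dec hinj h123 hP
  have hcross := cross_dec hinj h132 hP
  have step0 : ∀ a : Fin (m+p+1), a ≤ P → m ≤ (π a : ℕ) := by
    intro a ha
    have hsub : (Finset.Ioi P).image π ⊆ Finset.Iio (π a) := by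
      intro x hx
      simp only [Finset.mem_image, Finset.mem_Ioi] at hx
      obtain ⟨c, hc, rfl⟩ := hx
      rw [Finset.mem_Iio]
      rcases lt_or_eq_of_le ha with h' | h'
      · exact hcross a c h' hc
      · rw [h']
        rcases lt_or_eq_of_le (hP c) with h'' | h''
        · exact h''
        · exact absurd (hinj h'') (by intro e; rw [e] at hc; exact lt_irrefl _ hc)
    have hcard := Finset.card_le_card hsub
    rw [Finset.card_image_of_injective _ hinj, Fin.card_Ioi, Fin.card_Iio] at hcard
    omega
  have hset : (Finset.Iic P).image π = Finset.Ici (⟨m, by omega⟩ : Fin (m+p+1)) := by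
    apply Finset.eq_of_subset_of_card_le
    · intro x hx
      simp only [Finset.mem_image, Finset.mem_Iic] at hx
      obtain ⟨a, ha, rfl⟩ := hx
      exact Finset.mem_Ici.mpr (Fin.le_def.mpr (step0 a ha))
    · rw [Finset.card_image_of_injective _ hinj, Fin.card_Ici, Fin.card_Iic]
      have e1 : ((⟨m, by omega⟩ : Fin (m+p+1)) : ℕ) = m := rfl
      simp only [e1, hPv]
      omega
  have step1 : ∀ c : Fin (m+p+1), P < c → (π c : ℕ) < m := by
    intro c hc
    by_contra h
    push_neg at h
    have hmem : π c ∈ Finset.Ici (⟨m, by omega⟩ : Fin (m+p+1)) :=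
      Finset.mem_Ici.mpr (Fin.le_def.mpr h)
    rw [← hset] at hmem
    simp only [Finset.mem_image, Finset.mem_Iic] at hmem
    obtain ⟨a, ha, hae⟩ := hmem
    have hac := hinj hae
    rw [hac] at ha
    exact absurd ha (not_le.mpr hc)
  have step2 : ∀ a : Fin (m+p+1), a < P → (π a : ℕ) = m + p - 1 - (a : ℕ) := by
    intro a haP
    have hav : (a : ℕ) < p := Fin.lt_def.mp haP
    have hsubU : (insert P (Finset.Iio a)).image π ⊆ Finset.Ioi (π a) := by
      intro x hx
      simp only [Finset.mem_image, Finset.mem_insert, Finset.mem_Iio] at hx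
      obtain ⟨b, hb', rfl⟩ := hx
      rw [Finset.mem_Ioi]
      rcases hb' with rfl | hba
      · rcases lt_or_eq_of_le (hP a) with h' | h'
        · exact h'
        · exact absurd (hinj h') (by intro e; rw [e] at haP; exact lt_irrefl _ haP)
      · exact hdec b a hba haP
    have hcardU := Finset.card_le_card hsubU
    rw [Finset.card_image_of_injective _ hinj, Fin.card_Ioi,
      Finset.card_insert_of_notMem (by
        simp only [Finset.mem_Iio]
        exact fun h => absurd (h.trans haP) (lt_irrefl P)), Fin.card_Iio] at hcardU
    have hsubL : ((Finset.Ioi a).erase P).image π ⊆ Finset.Iio (π a) := by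
      intro x hx
      simp only [Finset.mem_image, Finset.mem_erase, Finset.mem_Ioi] at hx
      obtain ⟨b, ⟨hbP, hab⟩, rfl⟩ := hx
      rw [Finset.mem_Iio]
      rcases lt_trichotomy b P with h' | h' | h'
      · exact hdec a b hab h'
      · exact absurd h' hbP
      · exact hcross a b haP h'
    have hcardL := Finset.card_le_card hsubL
    rw [Finset.card_image_of_injective _ hinj,
      Finset.card_erase_of_mem (Finset.mem_Ioi.mpr haP), Fin.card_Ioi, Fin.card_Iio] at hcardL
    have := (π a).isLt
    omega
  have hπlt : ∀ j : Fin m, (π ⟨p + 1 + (j : ℕ), by omega⟩ : ℕ) < m := by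
    intro j
    exact step1 _ (Fin.lt_def.mpr (show p < p + 1 + (j : ℕ) by omega))
  refine ⟨fun j => ⟨(π ⟨p + 1 + (j : ℕ), by omega⟩ : ℕ), hπlt j⟩, ?_, ?_⟩
  · apply Finite.injective_iff_bijective.mp
    intro j j' hjj
    simp only [Fin.mk.injEq] at hjj
    have h1 : π ⟨p + 1 + (j : ℕ), by omega⟩ = π ⟨p + 1 + (j' : ℕ), by omega⟩ := Fin.ext hjj
    have h2 := hinj h1
    simp only [Fin.mk.injEq] at h2
    exact Fin.ext (by omega)
  · funext i
    apply Fin.ext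
    rcases lt_trichotomy ((i : ℕ)) p with h | h | h
    · rw [ins_val_lt _ h]
      exact step2 i (Fin.lt_def.mpr h)
    · rw [ins_val_eq _ h]
      have hiP : i = P := Fin.ext h
      rw [hiP, hmax]
    · rw [ins_val_gt _ h]
      show (π i : ℕ) = (π ⟨p + 1 + ((i : ℕ) - p - 1), by have := i.isLt; omega⟩ : ℕ)
      have hii : (⟨p + 1 + ((i : ℕ) - p - 1), by have := i.isLt; omega⟩ : Fin (m+p+1)) = i :=
        Fin.ext (by simp only; omega)
      rw [hii]

end Structure

noncomputable def aN (n : ℕ) : ℕ := Nat.card {π : Fin n → Fin n // Function.Bijective π ∧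
  Avoids p123 π ∧ Avoids p132 π ∧ ContainsOnce p213 π}

noncomputable def gN (n : ℕ) : ℕ := Nat.card {π : Fin n → Fin n // Function.Bijective π ∧
  Avoids p123 π ∧ Avoids p132 π ∧ Avoids p213 π}

lemma aN_eq_zero {n : ℕ} (h : n ≤ 2) : aN n = 0 := by
  have : IsEmpty {π : Fin n → Fin n // Function.Bijective π ∧
      Avoids p123 π ∧ Avoids p132 π ∧ ContainsOnce p213 π} := by
    constructor
    rintro ⟨π, -, -, -, ⟨f, hf, -⟩⟩
    have h01 := Fin.lt_def.mp (hf.1 (show (0:Fin 3) < 1 by decide))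
    have h12 := Fin.lt_def.mp (hf.1 (show (1:Fin 3) < 2 by decide))
    have := (f 2).isLt
    omega
  rw [aN]
  exact Nat.card_of_isEmpty

lemma no_occ_small {n : ℕ} (hn : n ≤ 2) (π : Fin n → Fin n) (τ : Fin 3 → Fin 3) :
    Avoids τ π := by
  rintro ⟨f, hf, -⟩
  have h01 := Fin.lt_def.mp (hf (show (0:Fin 3) < 1 by decide))
  have h12 := Fin.lt_def.mp (hf (show (1:Fin 3) < 2 by decide))
  have := (f 2).isLt
  omega

lemma gN_zero : gN 0 = 1 := by
  have h0 : ∀ τ : Fin 3 → Fin 3, Avoids τ (fun i : Fin 0 => i) := fun τ =>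
    no_occ_small (by omega) _ τ
  haveI : Nonempty {π : Fin 0 → Fin 0 // Function.Bijective π ∧
      Avoids p123 π ∧ Avoids p132 π ∧ Avoids p213 π} :=
    ⟨⟨fun i => i, Function.bijective_id, h0 _, h0 _, h0 _⟩⟩
  haveI : Subsingleton {π : Fin 0 → Fin 0 // Function.Bijective π ∧
      Avoids p123 π ∧ Avoids p132 π ∧ Avoids p213 π} := by
    constructor
    rintro ⟨π, -⟩ ⟨π', -⟩
    apply Subtype.ext
    funext i
    exact i.elim0
  exact Nat.card_unique

lemma gN_one : gN 1 = 1 := by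
  have h0 : ∀ τ : Fin 3 → Fin 3, Avoids τ (fun i : Fin 1 => i) := fun τ =>
    no_occ_small (by omega) _ τ
  haveI : Nonempty {π : Fin 1 → Fin 1 // Function.Bijective π ∧
      Avoids p123 π ∧ Avoids p132 π ∧ Avoids p213 π} :=
    ⟨⟨fun i => i, Function.bijective_id, h0 _, h0 _, h0 _⟩⟩
  haveI : Subsingleton {π : Fin 1 → Fin 1 // Function.Bijective π ∧
      Avoids p123 π ∧ Avoids p132 π ∧ Avoids p213 π} := by
    constructor
    rintro ⟨π, -⟩ ⟨π', -⟩
    apply Subtype.ext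
    funext i
    exact Subsingleton.elim _ _
  exact Nat.card_unique

lemma gN_rec (m : ℕ) : gN (m+2) = gN (m+1) + gN m := by
  classical
  let Φ : ({π : Fin (m+1) → Fin (m+1) // Function.Bijective π ∧
        Avoids p123 π ∧ Avoids p132 π ∧ Avoids p213 π} ⊕
      {π : Fin m → Fin m // Function.Bijective π ∧
        Avoids p123 π ∧ Avoids p132 π ∧ Avoids p213 π}) →
      {π : Fin (m+2) → Fin (m+2) // Function.Bijective π ∧
        Avoids p123 π ∧ Avoids p132 π ∧ Avoids p213 π} :=
    Sum.elim
      (fun σ => ⟨ins (m+1) 0 σ.1, ins_bijective σ.2.1,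
        (avoids123_ins σ.1).mpr σ.2.2.1, (avoids132_ins σ.1).mpr σ.2.2.2.1,
        (avoids213_ins σ.1).mpr ⟨by omega, σ.2.2.2.2⟩⟩)
      (fun σ => ⟨ins m 1 σ.1, ins_bijective σ.2.1,
        (avoids123_ins σ.1).mpr σ.2.2.1, (avoids132_ins σ.1).mpr σ.2.2.2.1,
        (avoids213_ins σ.1).mpr ⟨by omega, σ.2.2.2.2⟩⟩)
  have hΦ : Function.Bijective Φ := by
    constructor
    · rintro (σ | σ) (σ' | σ') h <;>
        simp only [Φ, Sum.elim_inl, Sum.elim_inr, Subtype.mk.injEq] at h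
      · exact congrArg Sum.inl (Subtype.ext (ins_arg_inj h))
      · exfalso
        have hv := congrArg Fin.val (congrFun h (⟨0, by omega⟩ : Fin (m+2)))
        rw [ins_val_eq (p := 0) σ.1 rfl, ins_val_lt (p := 1) σ'.1 Nat.zero_lt_one] at hv
        omega
      · exfalso
        have hv := congrArg Fin.val (congrFun h (⟨0, by omega⟩ : Fin (m+2)))
        rw [ins_val_lt (p := 1) σ.1 Nat.zero_lt_one, ins_val_eq (p := 0) σ'.1 rfl] at hv
        omega
      · exact congrArg Sum.inr (Subtype.ext (ins_arg_inj h))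
    · rintro ⟨π, hb, h123, h132, h213⟩
      obtain ⟨P, hPmax⟩ := hb.surjective (Fin.last (m+1))
      have hm : ∀ x, π x ≤ π P := by
        intro x
        rw [hPmax]
        exact Fin.le_last (π x)
      have hple := maxpos_le_one hb.injective h123 hm h213
      have hcase : (P : ℕ) = 0 ∨ (P : ℕ) = 1 := by omega
      rcases hcase with h | h
      · have hP0 : P = ⟨0, by omega⟩ := Fin.ext h
        rw [hP0] at hPmax
        obtain ⟨σ, hσb, hπeq⟩ := exists_rep (m+1) 0 π hb h123 h132 hPmax
        have h213' := hπeq ▸ h213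
        refine ⟨Sum.inl ⟨σ, hσb, (avoids123_ins σ).mp (hπeq ▸ h123),
          (avoids132_ins σ).mp (hπeq ▸ h132), ((avoids213_ins σ).mp h213').2⟩, ?_⟩
        exact Subtype.ext hπeq.symm
      · have hP1 : P = ⟨1, by omega⟩ := Fin.ext h
        rw [hP1] at hPmax
        obtain ⟨σ, hσb, hπeq⟩ := exists_rep m 1 π hb h123 h132 hPmax
        have h213' := hπeq ▸ h213
        refine ⟨Sum.inr ⟨σ, hσb, (avoids123_ins σ).mp (hπeq ▸ h123),
          (avoids132_ins σ).mp (hπeq ▸ h132), ((avoids213_ins σ).mp h213').2⟩, ?_⟩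
        exact Subtype.ext hπeq.symm
  have := Nat.card_eq_of_bijective Φ hΦ
  rw [Nat.card_sum] at this
  rw [gN, gN, gN]
  omega

lemma aN_rec (m : ℕ) : aN (m+3) = aN (m+2) + aN (m+1) + gN m := by
  classical
  let Φ : ({π : Fin (m+2) → Fin (m+2) // Function.Bijective π ∧
        Avoids p123 π ∧ Avoids p132 π ∧ ContainsOnce p213 π} ⊕
      {π : Fin (m+1) → Fin (m+1) // Function.Bijective π ∧
        Avoids p123 π ∧ Avoids p132 π ∧ ContainsOnce p213 π} ⊕
      {π : Fin m → Fin m // Function.Bijective π ∧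
        Avoids p123 π ∧ Avoids p132 π ∧ Avoids p213 π}) →
      {π : Fin (m+3) → Fin (m+3) // Function.Bijective π ∧
        Avoids p123 π ∧ Avoids p132 π ∧ ContainsOnce p213 π} :=
    Sum.elim
      (fun σ => ⟨ins (m+2) 0 σ.1, ins_bijective σ.2.1,
        (avoids123_ins σ.1).mpr σ.2.2.1, (avoids132_ins σ.1).mpr σ.2.2.2.1,
        (containsOnce_ins σ.1).mpr (Or.inr ⟨by omega, σ.2.2.2.2⟩)⟩)
      (Sum.elim
        (fun σ => ⟨ins (m+1) 1 σ.1, ins_bijective σ.2.1,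
          (avoids123_ins σ.1).mpr σ.2.2.1, (avoids132_ins σ.1).mpr σ.2.2.2.1,
          (containsOnce_ins σ.1).mpr (Or.inr ⟨by omega, σ.2.2.2.2⟩)⟩)
        (fun σ => ⟨ins m 2 σ.1, ins_bijective σ.2.1,
          (avoids123_ins σ.1).mpr σ.2.2.1, (avoids132_ins σ.1).mpr σ.2.2.2.1,
          (containsOnce_ins σ.1).mpr (Or.inl ⟨rfl, σ.2.2.2.2⟩)⟩))
  have hΦ : Function.Bijective Φ := by
    constructor
    · rintro (σ | σ | σ) (σ' | σ' | σ') h <;>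
        simp only [Φ, Sum.elim_inl, Sum.elim_inr, Subtype.mk.injEq] at h
      · exact congrArg Sum.inl (Subtype.ext (ins_arg_inj h))
      · exfalso
        have hv := congrArg Fin.val (congrFun h (⟨0, by omega⟩ : Fin (m+3)))
        rw [ins_val_eq (p := 0) σ.1 rfl, ins_val_lt (p := 1) σ'.1 Nat.zero_lt_one] at hv
        omega
      · exfalso
        have hv := congrArg Fin.val (congrFun h (⟨0, by omega⟩ : Fin (m+3)))
        rw [ins_val_eq (p := 0) σ.1 rfl,
          ins_val_lt (p := 2) σ'.1 Nat.zero_lt_two] at hv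
        omega
      · exfalso
        have hv := congrArg Fin.val (congrFun h (⟨0, by omega⟩ : Fin (m+3)))
        rw [ins_val_lt (p := 1) σ.1 Nat.zero_lt_one, ins_val_eq (p := 0) σ'.1 rfl] at hv
        omega
      · exact congrArg Sum.inr (congrArg Sum.inl (Subtype.ext (ins_arg_inj h)))
      · exfalso
        have hv := congrArg Fin.val (congrFun h (⟨1, by omega⟩ : Fin (m+3)))
        rw [ins_val_eq (p := 1) σ.1 rfl,
          ins_val_lt (p := 2) σ'.1 Nat.one_lt_two] at hv
        omega
      · exfalso
        have hv := congrArg Fin.val (congrFun h (⟨0, by omega⟩ : Fin (m+3)))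
        rw [ins_val_lt (p := 2) σ.1 Nat.zero_lt_two, ins_val_eq (p := 0) σ'.1 rfl] at hv
        omega
      · exfalso
        have hv := congrArg Fin.val (congrFun h (⟨1, by omega⟩ : Fin (m+3)))
        rw [ins_val_lt (p := 2) σ.1 Nat.one_lt_two, ins_val_eq (p := 1) σ'.1 rfl] at hv
        omega
      · exact congrArg Sum.inr (congrArg Sum.inr (Subtype.ext (ins_arg_inj h)))
    · rintro ⟨π, hb, h123, h132, h213⟩
      obtain ⟨P, hPmax⟩ := hb.surjective (Fin.last (m+2))
      have hm : ∀ x, π x ≤ π P := by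
        intro x
        rw [hPmax]
        exact Fin.le_last (π x)
      have hple := maxpos_le_two hb.injective h123 hm h213
      have hcase : (P : ℕ) = 0 ∨ (P : ℕ) = 1 ∨ (P : ℕ) = 2 := by omega
      rcases hcase with h | h | h
      · have hP0 : P = ⟨0, by omega⟩ := Fin.ext h
        rw [hP0] at hPmax
        obtain ⟨σ, hσb, hπeq⟩ := exists_rep (m+2) 0 π hb h123 h132 hPmax
        have h213' := hπeq ▸ h213
        rcases (containsOnce_ins σ).mp h213' with ⟨h02, -⟩ | ⟨-, hco⟩
        · omega
        · refine ⟨Sum.inl ⟨σ, hσb, (avoids123_ins σ).mp (hπeq ▸ h123),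
            (avoids132_ins σ).mp (hπeq ▸ h132), hco⟩, ?_⟩
          exact Subtype.ext hπeq.symm
      · have hP1 : P = ⟨1, by omega⟩ := Fin.ext h
        rw [hP1] at hPmax
        obtain ⟨σ, hσb, hπeq⟩ := exists_rep (m+1) 1 π hb h123 h132 hPmax
        have h213' := hπeq ▸ h213
        rcases (containsOnce_ins σ).mp h213' with ⟨h12, -⟩ | ⟨-, hco⟩
        · omega
        · refine ⟨Sum.inr (Sum.inl ⟨σ, hσb, (avoids123_ins σ).mp (hπeq ▸ h123),
            (avoids132_ins σ).mp (hπeq ▸ h132), hco⟩), ?_⟩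
          exact Subtype.ext hπeq.symm
      · have hP2 : P = ⟨2, by omega⟩ := Fin.ext h
        rw [hP2] at hPmax
        obtain ⟨σ, hσb, hπeq⟩ := exists_rep m 2 π hb h123 h132 hPmax
        have h213' := hπeq ▸ h213
        rcases (containsOnce_ins σ).mp h213' with ⟨-, hav⟩ | ⟨h21, -⟩
        · refine ⟨Sum.inr (Sum.inr ⟨σ, hσb, (avoids123_ins σ).mp (hπeq ▸ h123),
            (avoids132_ins σ).mp (hπeq ▸ h132), hav⟩), ?_⟩
          exact Subtype.ext hπeq.symm
        · omega
  have hcard := Nat.card_eq_of_bijective Φ hΦ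
  rw [Nat.card_sum, Nat.card_sum] at hcard
  rw [aN, aN, aN, gN]
  omega


open PowerSeries

lemma coeff_one_sub_X_sub_X2_mul (B : PowerSeries ℚ) (n : ℕ) :
    (coeff n) (((1 : PowerSeries ℚ) - X - X^2) * B) =
      coeff n B - (if 1 ≤ n then coeff (n-1) B else 0)
        - (if 2 ≤ n then coeff (n-2) B else 0) := by
  rw [sub_mul, sub_mul, one_mul, map_sub, map_sub]
  congr 2
  · rw [show (X : PowerSeries ℚ) * B = X^1 * B by rw [pow_one], coeff_X_pow_mul']
  · rw [coeff_X_pow_mul']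

lemma hG : ((1 : PowerSeries ℚ) - X - X^2) * PowerSeries.mk (fun n => (gN n : ℚ)) = 1 := by
  ext n
  rw [coeff_one_sub_X_sub_X2_mul]
  match n with
  | 0 => simp [gN_zero]
  | 1 => simp [gN_zero, gN_one]
  | (k+2) =>
    rw [if_pos (by omega), if_pos (by omega), coeff_one, if_neg (by omega)]
    rw [coeff_mk, coeff_mk, coeff_mk]
    show ((gN (k+2) : ℚ)) - (gN (k+1) : ℚ) - (gN k : ℚ) = 0
    rw [gN_rec k]
    push_cast
    ring

lemma hA : ((1 : PowerSeries ℚ) - X - X^2) * PowerSeries.mk (fun n => (aN n : ℚ)) =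
    X^3 * PowerSeries.mk (fun n => (gN n : ℚ)) := by
  ext n
  rw [coeff_one_sub_X_sub_X2_mul, coeff_X_pow_mul']
  match n with
  | 0 => simp [aN_eq_zero]
  | 1 => simp [aN_eq_zero]
  | 2 =>
    rw [coeff_mk, coeff_mk, if_pos (by omega), if_pos (by omega), if_neg (by omega)]
    rw [coeff_mk]
    show ((aN 2 : ℚ)) - (aN 1 : ℚ) - (aN 0 : ℚ) = 0
    rw [aN_eq_zero (by omega), aN_eq_zero (by omega), aN_eq_zero (by omega)]
    norm_num
  | (k+3) =>
    rw [if_pos (by omega), if_pos (by omega), if_pos (by omega)]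
    rw [coeff_mk, coeff_mk, coeff_mk, coeff_mk]
    show ((aN (k+3) : ℚ)) - (aN (k+2) : ℚ) - (aN (k+1) : ℚ) = (gN k : ℚ)
    rw [aN_rec k]
    push_cast
    ring

end Stmt3Aux

open PowerSeries in
/-- the generating function of `|Sₙ(123,132; 213)|` is `x³/(1−x−x²)²`. -/
theorem stmt3 :
    ((1 - X - X ^ 2) ^ 2 : PowerSeries ℚ) *
      PowerSeries.mk (fun n =>
        (Nat.card {π : Fin n → Fin n // Function.Bijective π ∧
          Avoids p123 π ∧ Avoids p132 π ∧ ContainsOnce p213 π} : ℚ)) = X ^ 3 := by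
  show ((1 - X - X ^ 2) ^ 2 : PowerSeries ℚ) *
      PowerSeries.mk (fun n => (Stmt3Aux.aN n : ℚ)) = X ^ 3
  calc ((1 - X - X ^ 2) ^ 2 : PowerSeries ℚ) *
          PowerSeries.mk (fun n => (Stmt3Aux.aN n : ℚ))
      = (1 - X - X ^ 2) * ((1 - X - X ^ 2) *
          PowerSeries.mk (fun n => (Stmt3Aux.aN n : ℚ))) := by ring
    _ = (1 - X - X ^ 2) * (X^3 * PowerSeries.mk (fun n => (Stmt3Aux.gN n : ℚ))) := by
          rw [Stmt3Aux.hA]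
    _ = X^3 * ((1 - X - X ^ 2) * PowerSeries.mk (fun n => (Stmt3Aux.gN n : ℚ))) := by ring
    _ = X^3 := by rw [Stmt3Aux.hG, mul_one]
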